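/- (Proposition 3) Let Δ, v, w, t be positive reals with t ≤ Δ·(v + 2w)/(v + w)². Define, for t̃ ∈ ℝ, y₁(t̃) := t̃·w/v, y₂(t̃) := Δ/v − t̃, y₃(t̃) := Δ/v + Δ/w + t̃·w/v − (1 + w/v)·(t − t̃), and let S be the set of t̃ ∈ [0, t] such that: y₃(t̃) ≥ y₂(t̃); y₃(t̃) ≥ Δ/v + Δ/w − t; y₁(t̃) ≤ Δ/v − t; and for all x ∈ [0, t − t̃], t − t̃ − x ≤ (v/w)·(t̃ + y₁(t̃) − x·w/v). Then t̃* := w·t/(v + 2w) is the minimum of S, and the corresponding relative power reduction (y₂(t̃*) − y₁(t̃*))/(Δ/v) = 1 − (v + w)·t̃*/Δ equals 1 − t·((v + w)/(v + 2w))·(w/Δ). -/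

import Mathlib

theorem stmt_14 (Δ v w t : ℝ) (hΔ : 0 < Δ) (hv : 0 < v) (hw : 0 < w) (ht : 0 < t)
    (hfeas : t ≤ Δ * (v + 2 * w) / (v + w) ^ 2)
    (y₁ y₂ y₃ : ℝ → ℝ)
    (hy₁ : ∀ ttilde, y₁ ttilde = ttilde * w / v)
    (hy₂ : ∀ ttilde, y₂ ttilde = Δ / v - ttilde)
    (hy₃ : ∀ ttilde, y₃ ttilde =
      Δ / v + Δ / w + ttilde * w / v - (1 + w / v) * (t - ttilde))
    (S : Set ℝ)
    (hS : S = {ttilde ∈ Set.Icc (0:ℝ) t |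
      y₃ ttilde ≥ y₂ ttilde ∧
      y₃ ttilde ≥ Δ / v + Δ / w - t ∧
      y₁ ttilde ≤ Δ / v - t ∧
      ∀ x ∈ Set.Icc (0:ℝ) (t - ttilde),
        t - ttilde - x ≤ v / w * (ttilde + y₁ ttilde - x * w / v)}) :
    IsLeast S (w * t / (v + 2 * w)) ∧
    (y₂ (w * t / (v + 2 * w)) - y₁ (w * t / (v + 2 * w))) / (Δ / v) =
      1 - (v + w) * (w * t / (v + 2 * w)) / Δ ∧
    1 - (v + w) * (w * t / (v + 2 * w)) / Δ =
      1 - t * ((v + w) / (v + 2 * w)) * (w / Δ) := by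
  have hv2w : (0:ℝ) < v + 2 * w := by linarith
  have hvw : (0:ℝ) < v + w := by linarith
  rw [le_div_iff₀ (by positivity)] at hfeas
  obtain ⟨s, hs⟩ : ∃ s : ℝ, s = w * t / (v + 2 * w) := ⟨_, rfl⟩
  rw [← hs]
  have hs' : s * (v + 2 * w) = w * t := by
    rw [hs]; field_simp
  have hs_pos : 0 < s := by rw [hs]; positivity
  have hs_le : s ≤ t := by
    rw [hs, div_le_iff₀ hv2w]; nlinarith
  -- condition 2 holds with equality at s
  have heq2 : y₃ s = Δ / v + Δ / w - t := by
    rw [hy₃, hs]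
    field_simp
    ring
  -- t - s ≤ Δ / w
  have htseq : (t - s) * (v + 2 * w) = t * (v + w) := by linear_combination -hs'
  have hts : t - s ≤ Δ / w := by
    rw [le_div_iff₀ hw]
    have h5 : (t - s) * w * (v + 2 * w) ≤ Δ * (v + 2 * w) := by
      nlinarith [htseq, hfeas, mul_pos ht hvw, mul_pos (mul_pos ht hvw) hv]
    exact le_of_mul_le_mul_right h5 hv2w
  constructor
  · constructor
    · rw [hS]
      refine ⟨⟨le_of_lt hs_pos, hs_le⟩, ?_, ?_, ?_, ?_⟩
      · rw [heq2, hy₂]; linarith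
      · rw [heq2]
      · rw [hy₁]
        have h4 : s * (v + 2 * w) * w = w * t * w := by rw [hs']
        have key : s * w ≤ Δ - t * v := by
          have h5 : s * w * (v + 2 * w) ≤ (Δ - t * v) * (v + 2 * w) := by
            nlinarith [h4, hfeas]
          exact le_of_mul_le_mul_right h5 hv2w
        have heqd : Δ / v - t = (Δ - t * v) / v := by field_simp
        rw [heqd]
        gcongr
      · intro x hx
        rw [hy₁]
        have heq4 : v / w * (s + s * w / v - x * w / v) = t - s - x := by
          field_simp
          linear_combination hs'
        exact heq4.ge
    · intro a ha
      rw [hS] at ha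
      obtain ⟨⟨ha0, hat⟩, h1, h2, h3, h4⟩ := ha
      rw [hy₃] at h2
      rw [hs, div_le_iff₀ hv2w]
      rw [ge_iff_le] at h2
      have h2v : (Δ / v + Δ / w - t) * v ≤
          (Δ / v + Δ / w + a * w / v - (1 + w / v) * (t - a)) * v :=
        mul_le_mul_of_nonneg_right h2 hv.le
      have hΔv : Δ / v * v = Δ := by field_simp
      have haw : a * w / v * v = a * w := by field_simp
      have hw1 : (1 + w / v) * (t - a) * v = (v + w) * (t - a) := by field_simp
      nlinarith [h2v, hΔv, haw, hw1]
  · constructor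
    · rw [hy₂, hy₁, hs]
      field_simp [hv.ne', hw.ne', hΔ.ne', hv2w.ne']
      ring
    · rw [hs]
      field_simp [hv.ne', hw.ne', hΔ.ne', hv2w.ne']
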